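/- Let A : ℝ → ℝ be twice differentiable and let n, λ be real constants. Define E₅ = 2A³(n² − 1) + A(3 + n)((n − 1)(3 + n)λ − 4nA') + (3 + n)²A'' and E₆ = −2A²(1 + n) + (3 + n)(−(3 + n)λ + 2A'). Then 2E₅(x) − (3 + n)E₆'(x) + 2(n − 1)A(x)E₆(x) = 0 for all x. In particular, if E₆ vanishes identically then so does E₅. -/

import Mathlib

/-- For `A` twice differentiable and the expressions
`E₅ = 2A³(n² - 1) + A(3 + n)((n - 1)(3 + n)λ - 4nA') + (3 + n)²A''` and
`E₆ = -2A²(1 + n) + (3 + n)(-(3 + n)λ + 2A')`, one has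
`2E₅ - (3 + n)E₆' + 2(n - 1)AE₆ = 0`; in particular `E₆ ≡ 0` implies
`E₅ ≡ 0`. -/
theorem stmt15 (A : ℝ → ℝ) (n lam : ℝ)
    (hA : Differentiable ℝ A)
    (hA1 : Differentiable ℝ (deriv A))
    (E₅ E₆ : ℝ → ℝ)
    (hE₅ : ∀ x : ℝ, E₅ x =
      2 * (A x) ^ 3 * (n ^ 2 - 1)
        + A x * (3 + n) * ((n - 1) * (3 + n) * lam - 4 * n * deriv A x)
        + (3 + n) ^ 2 * deriv (deriv A) x)
    (hE₆ : ∀ x : ℝ, E₆ x =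
      -2 * (A x) ^ 2 * (1 + n) + (3 + n) * (-(3 + n) * lam + 2 * deriv A x)) :
    (∀ x : ℝ, 2 * E₅ x - (3 + n) * deriv E₆ x + 2 * (n - 1) * A x * E₆ x = 0) ∧
    ((∀ x : ℝ, E₆ x = 0) → ∀ x : ℝ, E₅ x = 0) := by
  have hderiv : ∀ x : ℝ, deriv E₆ x =
      -2 * (2 * A x * deriv A x) * (1 + n) + (3 + n) * (2 * deriv (deriv A) x) := by
    intro x
    have hEfun : E₆ = fun x => -2 * (A x) ^ 2 * (1 + n)
        + (3 + n) * (-(3 + n) * lam + 2 * deriv A x) := funext hE₆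
    have h1 : HasDerivAt (fun x => -2 * (A x) ^ 2 * (1 + n)
        + (3 + n) * (-(3 + n) * lam + 2 * deriv A x))
        (-2 * (2 * A x * deriv A x) * (1 + n) + (3 + n) * (2 * deriv (deriv A) x)) x := by
      have hAx : HasDerivAt A (deriv A x) x := (hA x).hasDerivAt
      have hA1x : HasDerivAt (deriv A) (deriv (deriv A) x) x := (hA1 x).hasDerivAt
      have := (((hAx.pow 2).const_mul (-2 : ℝ)).mul_const (1 + n)).add
        (((hA1x.const_mul (2 : ℝ)).const_add (-(3 + n) * lam)).const_mul (3 + n))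
      exact this.congr_deriv (by norm_num)
    rw [hEfun, h1.deriv]
  refine ⟨fun x => ?_, fun h x => ?_⟩
  · rw [hE₅, hE₆, hderiv]; ring
  · have h0 : deriv E₆ x = 0 := by
      have hz : E₆ = fun _ => (0 : ℝ) := funext h
      rw [hz]; simp
    have key : 2 * E₅ x - (3 + n) * deriv E₆ x + 2 * (n - 1) * A x * E₆ x = 0 := by
      rw [hE₅, hE₆, hderiv]; ring
    rw [h0, h x] at key
    linarith
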